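/- Let q be an odd prime power with q ≡ 3 (mod 4) and q > 3, and set d = (q-3)/2. The number of triples (y₁, y₂, y₃) ∈ (F_q*)³ satisfying y₁ - y₂ + y₃ - 1 = 0 and y₁^d - y₂^d + y₃^d - 1 = 0, where additionally y₁, y₂, y₃ are all nonzero squares, equals q - 2. -/

import Mathlib

theorem stmt_4 (F : Type*) [Field F] [Fintype F] [DecidableEq F]
    (hq3 : Fintype.card F % 4 = 3) (hq : 3 < Fintype.card F)
    (d : ℕ) (hd : d = (Fintype.card F - 3) / 2) :
    {y : F × F × F |
        y.1 ≠ 0 ∧ y.2.1 ≠ 0 ∧ y.2.2 ≠ 0 ∧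
        IsSquare y.1 ∧ IsSquare y.2.1 ∧ IsSquare y.2.2 ∧
        y.1 - y.2.1 + y.2.2 - 1 = 0 ∧
        y.1 ^ d - y.2.1 ^ d + y.2.2 ^ d - 1 = 0}.ncard = Fintype.card F - 2 := by
  set q := Fintype.card F with hqdef
  -- -1 is not a square
  have hns : ¬ IsSquare (-1 : F) := by
    rw [FiniteField.isSquare_neg_one_iff]
    omega
  have hone : ((1 : F) ≠ 0 ∧ IsSquare (1 : F)) := ⟨one_ne_zero, IsSquare.one⟩
  -- key power identity
  have hpow : ∀ t : F, t ≠ 0 → IsSquare t → t ^ d = t⁻¹ := by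
    intro t ht ⟨z, hz⟩
    have hz0 : z ≠ 0 := by rintro rfl; simp at hz; exact ht hz
    have h2d : 2 * d = q - 3 := by omega
    have hcanc : t ^ d * t = 1 := by
      have : z ^ (q - 3) * z ^ 2 = 1 := by
        rw [← pow_add]
        have : q - 3 + 2 = q - 1 := by omega
        rw [this, FiniteField.pow_card_sub_one_eq_one z hz0]
      calc t ^ d * t = (z * z) ^ d * (z * z) := by rw [hz]
        _ = z ^ (2 * d) * z ^ 2 := by ring
        _ = 1 := by rw [h2d]; exact this
    exact eq_inv_of_mul_eq_one_left (mul_comm (t ^ d) t ▸ hcanc)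
  set Sq : Set F := {t : F | t ≠ 0 ∧ IsSquare t} with hSq
  -- cardinality of nonzero squares
  have hSqcard : Sq.ncard = (q - 1) / 2 := by
    set f : Fˣ →* Fˣ := powMonoidHom 2 with hf
    have hker : (f.ker : Set Fˣ) = {1, -1} := by
      ext x
      simp only [SetLike.mem_coe, MonoidHom.mem_ker, hf, powMonoidHom_apply,
        Set.mem_insert_iff, Set.mem_singleton_iff]
      constructor
      · intro h
        have : (x : F) * (x : F) = 1 := by
          have := congrArg (Units.val) h
          simpa [sq] using this
        rcases mul_self_eq_one_iff.mp this with h1 | h1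
        · left; exact Units.ext h1
        · right; exact Units.ext (by simpa using h1)
      · rintro (rfl | rfl) <;> apply Units.ext <;> simp
    have hne : (1 : Fˣ) ≠ -1 := by
      intro h
      apply hns
      have := congrArg (Units.val) h
      simp at this
      exact ⟨1, by rw [← this]; ring⟩
    have hkercard : Nat.card f.ker = 2 := by
      have : Nat.card f.ker = ((f.ker : Set Fˣ)).ncard := by
        rw [← Nat.card_coe_set_eq]
        rfl
      rw [this, hker, Set.ncard_pair hne]
    have hrange : Nat.card f.range * 2 = q - 1 := by
      have h1 : Nat.card Fˣ = Nat.card (Fˣ ⧸ f.ker) * Nat.card f.ker :=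
        Subgroup.card_eq_card_quotient_mul_card_subgroup f.ker
      have h2 : Nat.card (Fˣ ⧸ f.ker) = Nat.card f.range :=
        Nat.card_congr (QuotientGroup.quotientKerEquivRange f).toEquiv
      have h3 : Nat.card Fˣ = q - 1 := by
        rw [Nat.card_eq_fintype_card, Fintype.card_units]
      rw [h2, hkercard, h3] at h1
      omega
    have himg : Sq = Units.val '' (f.range : Set Fˣ) := by
      ext t
      simp only [hSq, Set.mem_setOf_eq, Set.mem_image, SetLike.mem_coe,
        MonoidHom.mem_range]
      constructor
      · rintro ⟨ht, z, hz⟩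
        have hz0 : z ≠ 0 := by rintro rfl; simp at hz; exact ht hz
        refine ⟨(Units.mk0 z hz0) ^ 2, ⟨Units.mk0 z hz0, rfl⟩, ?_⟩
        simp [sq, hz]
      · rintro ⟨v, ⟨u, rfl⟩, rfl⟩
        simp only [hf, powMonoidHom_apply]
        exact ⟨by simp, ⟨(u : F), by push_cast [sq]; ring⟩⟩
    rw [himg, Set.ncard_image_of_injective _ Units.val_injective]
    have : ((f.range : Set Fˣ)).ncard = Nat.card f.range := by
      rw [← Nat.card_coe_set_eq]; rfl
    omega
  -- describe the solution set
  have hset : {y : F × F × F |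
        y.1 ≠ 0 ∧ y.2.1 ≠ 0 ∧ y.2.2 ≠ 0 ∧
        IsSquare y.1 ∧ IsSquare y.2.1 ∧ IsSquare y.2.2 ∧
        y.1 - y.2.1 + y.2.2 - 1 = 0 ∧
        y.1 ^ d - y.2.1 ^ d + y.2.2 ^ d - 1 = 0} =
      ((fun t : F => ((1 : F), t, t)) '' Sq) ∪ ((fun t : F => (t, t, (1 : F))) '' Sq) := by
    ext ⟨a, b, c⟩
    simp only [Set.mem_setOf_eq, Set.mem_union, Set.mem_image, hSq, Prod.mk.injEq]
    constructor
    · rintro ⟨ha, hb, hc, hsa, hsb, hsc, h1, h2⟩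
      rw [hpow a ha hsa, hpow b hb hsb, hpow c hc hsc] at h2
      have h3 : b * c - a * c + a * b - a * b * c = 0 := by
        have ha' := mul_inv_cancel₀ ha
        have hb' := mul_inv_cancel₀ hb
        have hc' := mul_inv_cancel₀ hc
        linear_combination (a * b * c) * h2 - (b * c) * ha' + (a * c) * hb' -
          (a * b) * hc'
      have key : (a - 1) * (c - 1) * (a + c) = 0 := by
        linear_combination -h3 - (a + c - a * c) * h1
      have hac : a + c ≠ 0 := by
        intro h
        apply hns
        have hb1 : b = -1 := by linear_combination h - h1
        rw [← hb1]; exact hsb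
      rcases mul_eq_zero.mp key with h | h
      · rcases mul_eq_zero.mp h with h | h
        · left
          have ha1 : a = 1 := by linear_combination h
          have hcb : b = c := by linear_combination h - h1
          exact ⟨b, ⟨hb, hsb⟩, ha1.symm, rfl, hcb⟩
        · right
          have hc1 : c = 1 := by linear_combination h
          have hab : a = b := by linear_combination h1 - h
          exact ⟨a, ⟨ha, hsa⟩, rfl, hab, hc1.symm⟩
      · exact absurd h hac
    · rintro (⟨t, ⟨ht, hst⟩, rfl, rfl, rfl⟩ | ⟨t, ⟨ht, hst⟩, rfl, rfl, rfl⟩) <;>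
        exact ⟨by simp [ht], by simp [ht], by simp [ht], by simp [hst, IsSquare.one],
          by simp [hst, IsSquare.one], by simp [hst, IsSquare.one], by ring, by ring⟩
  rw [hset]
  have hinj1 : Function.Injective (fun t : F => ((1 : F), t, t)) := by
    intro x y h; simpa using congrArg (fun p : F × F × F => p.2.1) h
  have hinj2 : Function.Injective (fun t : F => (t, t, (1 : F))) := by
    intro x y h; simpa using congrArg (fun p : F × F × F => p.1) h
  have hcard1 : ((fun t : F => ((1 : F), t, t)) '' Sq).ncard = (q - 1) / 2 := by
    rw [Set.ncard_image_of_injective _ hinj1, hSqcard]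
  have hcard2 : ((fun t : F => (t, t, (1 : F))) '' Sq).ncard = (q - 1) / 2 := by
    rw [Set.ncard_image_of_injective _ hinj2, hSqcard]
  have hint : ((fun t : F => ((1 : F), t, t)) '' Sq) ∩ ((fun t : F => (t, t, (1 : F))) '' Sq)
      = {((1 : F), (1 : F), (1 : F))} := by
    ext ⟨a, b, c⟩
    simp only [Set.mem_inter_iff, Set.mem_image, hSq, Set.mem_setOf_eq,
      Prod.mk.injEq, Set.mem_singleton_iff]
    constructor
    · rintro ⟨⟨t, ht, rfl, rfl, rfl⟩, ⟨s, hs, h1, h2, h3⟩⟩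
      exact ⟨rfl, by rw [← h2, h1], by rw [← h2, h1]⟩
    · rintro ⟨rfl, rfl, rfl⟩
      exact ⟨⟨1, hone, rfl, rfl, rfl⟩, ⟨1, hone, rfl, rfl, rfl⟩⟩
  have hunion := Set.ncard_union_add_ncard_inter
    ((fun t : F => ((1 : F), t, t)) '' Sq) ((fun t : F => (t, t, (1 : F))) '' Sq)
  rw [hint, hcard1, hcard2, Set.ncard_singleton] at hunion
  omega
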